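/- Low-rank suppression, quantitatively: ‖z_a‖ = 1/σ_k and ‖x_a‖ ≥ 1 − (1 + ‖W₁‖)/σ_k; consequently, if σ_k > 1 + ‖W₁‖, then the steady-state response to the aligned input is suppressed relative to the input: ‖z_a‖ ≤ ‖x_a‖ / (σ_k − 1 − ‖W₁‖). -/

import Mathlib

open Matrix

/-- A vector of `ℝ^n` regarded as an element of Euclidean space, so that `‖euc x‖`
is the Euclidean (`ℓ²`) norm of `x`. -/
noncomputable def euc {n : ℕ} (x : Fin n → ℝ) : EuclideanSpace ℝ (Fin n) := WithLp.toLp 2 x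

/-- The operator norm of a square matrix acting on Euclidean space by
matrix–vector multiplication. -/
noncomputable def l2OpNorm {n : ℕ} (M : Matrix (Fin n) (Fin n) ℝ) : ℝ :=
  ‖Matrix.toEuclideanCLM (𝕜 := ℝ) M‖

lemma euc_norm_mulVec_le {n : ℕ} (M : Matrix (Fin n) (Fin n) ℝ) (x : Fin n → ℝ) :
    ‖euc (M.mulVec x)‖ ≤ l2OpNorm M * ‖euc x‖ := by
  have h : euc (M.mulVec x) = Matrix.toEuclideanCLM (𝕜 := ℝ) M (euc x) := rfl
  rw [h]
  exact (Matrix.toEuclideanCLM (𝕜 := ℝ) M).le_opNorm (euc x)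

/-- Low-rank suppression, quantitatively: `‖z_a‖ = 1/σ_k`,
`‖x_a‖ ≥ 1 - (1 + ‖W₁‖)/σ_k`, and if `σ_k > 1 + ‖W₁‖` then
`‖z_a‖ ≤ ‖x_a‖ / (σ_k - 1 - ‖W₁‖)`. -/
theorem low_rank_suppression_quantitative
    (N r : ℕ) (hr : 1 ≤ r) (hNr : r ≤ N)
    (U V : Matrix (Fin N) (Fin r) ℝ)
    (hU : Uᵀ * U = 1) (hV : Vᵀ * V = 1)
    (σ : Fin r → ℝ) (hσ : ∀ j, 0 < σ j)
    (W₁ : Matrix (Fin N) (Fin N) ℝ)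
    (W : Matrix (Fin N) (Fin N) ℝ)
    (hW : W = U * Matrix.diagonal σ * Vᵀ + W₁)
    (k : Fin r)
    (uk vk xa za : Fin N → ℝ)
    (huk : uk = fun i => U i k) (hvk : vk = fun i => V i k)
    (hxa : xa = uk + (σ k)⁻¹ • (W₁.mulVec vk - vk))
    (hza : za = -((σ k)⁻¹ • vk)) :
    ‖euc za‖ = 1 / σ k ∧
    ‖euc xa‖ ≥ 1 - (1 + l2OpNorm W₁) / σ k ∧
    (σ k > 1 + l2OpNorm W₁ →
      ‖euc za‖ ≤ ‖euc xa‖ / (σ k - 1 - l2OpNorm W₁)) := by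
  have hσk := hσ k
  have hnormsq : ∀ (A : Matrix (Fin N) (Fin r) ℝ), Aᵀ * A = 1 →
      ‖euc (fun i => A i k)‖ = 1 := by
    intro A hA
    have h1 : (Aᵀ * A) k k = (1 : ℝ) := by rw [hA]; simp
    have h2 : (Aᵀ * A) k k = ∑ j, A j k * A j k := by
      simp [Matrix.mul_apply, Matrix.transpose_apply]
    have : ‖euc (fun i => A i k)‖ ^ 2 = 1 := by
      rw [← real_inner_self_eq_norm_sq]
      rw [← h1, h2]
      simp only [euc, PiLp.inner_apply, RCLike.inner_apply, conj_trivial, mul_comm]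
    nlinarith [norm_nonneg (euc (fun i => A i k))]
  have hukn : ‖euc uk‖ = 1 := by rw [huk]; exact hnormsq U hU
  have hvkn : ‖euc vk‖ = 1 := by rw [hvk]; exact hnormsq V hV
  have hzan : ‖euc za‖ = 1 / σ k := by
    have h : euc za = -((σ k)⁻¹ • euc vk) := by rw [hza]; rfl
    rw [h, norm_neg, norm_smul, hvkn, mul_one, Real.norm_eq_abs,
      abs_of_pos (inv_pos.mpr hσk), one_div]
  have hWv : ‖euc (W₁.mulVec vk)‖ ≤ l2OpNorm W₁ := by
    have := euc_norm_mulVec_le W₁ vk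
    rwa [hvkn, mul_one] at this
  have hx : euc xa = euc uk + (σ k)⁻¹ • (euc (W₁.mulVec vk) - euc vk) := by
    rw [hxa]; rfl
  set c := (σ k)⁻¹ • (euc (W₁.mulVec vk) - euc vk) with hc
  have h1 : ‖euc xa‖ ≥ ‖euc uk‖ - ‖c‖ := by
    have h := norm_sub_le (euc uk + c) c
    rw [add_sub_cancel_right] at h
    rw [hx]; linarith
  have h2 : ‖c‖ ≤ (1 + l2OpNorm W₁) / σ k := by
    rw [hc, norm_smul]
    have h3 : ‖euc (W₁.mulVec vk) - euc vk‖ ≤ 1 + l2OpNorm W₁ := by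
      calc ‖euc (W₁.mulVec vk) - euc vk‖ ≤ ‖euc (W₁.mulVec vk)‖ + ‖euc vk‖ :=
        norm_sub_le _ _
      _ ≤ 1 + l2OpNorm W₁ := by rw [hvkn]; linarith
    rw [Real.norm_eq_abs, abs_of_pos (inv_pos.mpr hσk), div_eq_inv_mul]
    exact mul_le_mul_of_nonneg_left h3 (inv_pos.mpr hσk).le
  have hxlb : ‖euc xa‖ ≥ 1 - (1 + l2OpNorm W₁) / σ k := by
    rw [hukn] at h1; linarith
  refine ⟨hzan, hxlb, ?_⟩
  intro hgt
  have hpos : 0 < σ k - 1 - l2OpNorm W₁ := by linarith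
  rw [hzan, div_le_div_iff₀ hσk hpos]
  have h5 : (1 - (1 + l2OpNorm W₁) / σ k) * σ k = σ k - (1 + l2OpNorm W₁) := by
    field_simp
  have h6 := mul_le_mul_of_nonneg_right hxlb hσk.le
  nlinarith
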